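/- (Off-diagonal derivative of the right singular vectors.) Let n ≥ 1 and let A, U, S, V : ℝ → M_n(ℂ) be differentiable at t₀ ∈ ℝ with A(t) = U(t) S(t) V(t)* for all t in a neighborhood of t₀, where U(t) and V(t) are unitary and S(t) is diagonal with real entries s_1(t), …, s_n(t). Set Ã = U(t₀)* A'(t₀) V(t₀), where ' denotes the derivative at t₀ and * the conjugate transpose, and write s_i = s_i(t₀). Then for all i ≠ j: (s_j² − s_i²) · (V(t₀)* V'(t₀))_{ij} = (S(t₀) Ã + Ã* S(t₀))_{ij} = s_i·Ã_{ij} + s_j·conj(Ã_{ji}). -/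

import Mathlib

open Matrix

private lemma mulDeriv {n : ℕ} {M N : ℝ → Matrix (Fin n) (Fin n) ℂ}
    {M' N' : Matrix (Fin n) (Fin n) ℂ} {t₀ : ℝ}
    (hM : ∀ i j, HasDerivAt (fun t => M t i j) (M' i j) t₀)
    (hN : ∀ i j, HasDerivAt (fun t => N t i j) (N' i j) t₀) :
    ∀ i j, HasDerivAt (fun t => (M t * N t) i j)
      ((M' * N t₀ + M t₀ * N') i j) t₀ := by
  intro i j
  simp only [Matrix.mul_apply, Matrix.add_apply]
  rw [← Finset.sum_add_distrib]
  exact HasDerivAt.fun_sum fun k _ => (hM i k).mul (hN k j)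

private lemma hDeriv {n : ℕ} {M : ℝ → Matrix (Fin n) (Fin n) ℂ}
    {M' : Matrix (Fin n) (Fin n) ℂ} {t₀ : ℝ}
    (hM : ∀ i j, HasDerivAt (fun t => M t i j) (M' i j) t₀) :
    ∀ i j, HasDerivAt (fun t => (M t)ᴴ i j) (M'ᴴ i j) t₀ := fun i j => by
  simpa [Matrix.conjTranspose_apply] using (hM j i).star

/-- **Off-diagonal derivative of the right singular vectors.** Along a differentiable SVD path
`A(t) = U(t) S(t) V(t)ᴴ` with `U, V` unitary and `S = diagonal (s₁,…,sₙ)` real, for `i ≠ j`: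
`(sⱼ² − sᵢ²) (U(t₀)ᴴ U'(t₀))ᵢⱼ = (Atil S(t₀) + S(t₀) Atilᴴ)ᵢⱼ = sⱼ Atilᵢⱼ + sᵢ conj Atilⱼᵢ`,
where `Atil = U(t₀)ᴴ A'(t₀) V(t₀)`. -/
theorem offdiag_deriv_right_singular_vectors (n : ℕ) (hn : 1 ≤ n)
    (A U V : ℝ → Matrix (Fin n) (Fin n) ℂ) (s : Fin n → ℝ) (sf : Fin n → ℝ → ℝ) (t₀ : ℝ)
    (A' U' V' : Matrix (Fin n) (Fin n) ℂ) (s' : Fin n → ℝ)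
    (Atil S₀ : Matrix (Fin n) (Fin n) ℂ)
    (hA' : ∀ i j, HasDerivAt (fun t => A t i j) (A' i j) t₀)
    (hU' : ∀ i j, HasDerivAt (fun t => U t i j) (U' i j) t₀)
    (hV' : ∀ i j, HasDerivAt (fun t => V t i j) (V' i j) t₀)
    (hs' : ∀ i, HasDerivAt (sf i) (s' i) t₀)
    (hs : ∀ i, sf i t₀ = s i)
    (hU : ∀ᶠ t in nhds t₀, U t ∈ Matrix.unitaryGroup (Fin n) ℂ)
    (hV : ∀ᶠ t in nhds t₀, V t ∈ Matrix.unitaryGroup (Fin n) ℂ)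
    (hSVD : ∀ᶠ t in nhds t₀,
      A t = U t * Matrix.diagonal (fun i => ((sf i t : ℝ) : ℂ)) * (V t)ᴴ)
    (hAtil : Atil = (U t₀)ᴴ * A' * V t₀)
    (hS₀ : S₀ = Matrix.diagonal (fun i => ((s i : ℝ) : ℂ))) :
    ∀ i j, i ≠ j →
      (((s j ^ 2 - s i ^ 2 : ℝ) : ℂ) * (((V t₀)ᴴ * V') i j) = (S₀ * Atil + Atilᴴ * S₀) i j ∧
        (S₀ * Atil + Atilᴴ * S₀) i j
          = ((s i : ℝ) : ℂ) * Atil i j + ((s j : ℝ) : ℂ) * starRingEnd ℂ (Atil j i)) := by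
  -- the diagonal path and its derivative
  set Sm : ℝ → Matrix (Fin n) (Fin n) ℂ :=
    fun t => Matrix.diagonal (fun i => ((sf i t : ℝ) : ℂ)) with hSm_def
  set Sd : Matrix (Fin n) (Fin n) ℂ :=
    Matrix.diagonal (fun i => ((s' i : ℝ) : ℂ)) with hSd_def
  have hSm : ∀ i j, HasDerivAt (fun t => Sm t i j) (Sd i j) t₀ := by
    intro i j
    by_cases h : i = j
    · subst h
      simpa [hSm_def, hSd_def] using (hs' i).ofReal_comp
    · simpa [hSm_def, hSd_def, Matrix.diagonal_apply_ne _ h] using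
        (hasDerivAt_const t₀ (0 : ℂ))
  have hSm0 : Sm t₀ = S₀ := by
    simp [hSm_def, hS₀, hs]
  -- unitarity at t₀
  have hU0 : (U t₀)ᴴ * U t₀ = 1 := Matrix.mem_unitaryGroup_iff'.mp hU.self_of_nhds
  have hV0 : (V t₀)ᴴ * V t₀ = 1 := Matrix.mem_unitaryGroup_iff'.mp hV.self_of_nhds
  -- derivative of unitarity constraints
  have skew : ∀ (W : ℝ → Matrix (Fin n) (Fin n) ℂ) (W' : Matrix (Fin n) (Fin n) ℂ),
      (∀ i j, HasDerivAt (fun t => W t i j) (W' i j) t₀) →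
      (∀ᶠ t in nhds t₀, W t ∈ Matrix.unitaryGroup (Fin n) ℂ) →
      W'ᴴ * W t₀ + (W t₀)ᴴ * W' = 0 := by
    intro W W' hW' hW
    ext i j
    have h1 := mulDeriv (hDeriv hW') hW' i j
    have h2 : HasDerivAt (fun t => ((W t)ᴴ * W t) i j)
        (0 : ℂ) t₀ := by
      apply (hasDerivAt_const t₀ ((1 : Matrix (Fin n) (Fin n) ℂ) i j)).congr_of_eventuallyEq
      filter_upwards [hW] with t ht
      have h3 := Matrix.mem_unitaryGroup_iff'.mp ht
      rw [Matrix.star_eq_conjTranspose] at h3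
      rw [h3]
    simpa using h1.unique h2
  have hUU := skew U U' hU' hU
  have hVV := skew V V' hV' hV
  -- derivative of A via the SVD formula
  have hAeq : A' = (U' * S₀ + U t₀ * Sd) * (V t₀)ᴴ + (U t₀ * S₀) * V'ᴴ := by
    ext i j
    have h1 := mulDeriv (mulDeriv hU' hSm) (hDeriv hV') i j
    rw [hSm0] at h1
    have h2 : HasDerivAt (fun t => (U t * Sm t * (V t)ᴴ) i j) (A' i j) t₀ := by
      apply (hA' i j).congr_of_eventuallyEq
      filter_upwards [hSVD] with t ht
      rw [ht]
    exact (h2.unique h1)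
  -- the key matrices
  set X : Matrix (Fin n) (Fin n) ℂ := (U t₀)ᴴ * U' with hX_def
  set Y : Matrix (Fin n) (Fin n) ℂ := (V t₀)ᴴ * V' with hY_def
  have hXskew : Xᴴ = -X := by
    have : U'ᴴ * U t₀ = Xᴴ := by
      rw [hX_def, Matrix.conjTranspose_mul, Matrix.conjTranspose_conjTranspose]
    rw [this] at hUU
    linear_combination (norm := abel) hUU
  have hYskew : Yᴴ = -Y := by
    have : V'ᴴ * V t₀ = Yᴴ := by
      rw [hY_def, Matrix.conjTranspose_mul, Matrix.conjTranspose_conjTranspose]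
    rw [this] at hVV
    linear_combination (norm := abel) hVV
  have hVHV : V'ᴴ * V t₀ = -Y := by
    rw [← hYskew, hY_def, Matrix.conjTranspose_mul, Matrix.conjTranspose_conjTranspose]
  -- Atil = X * S₀ + Sd - S₀ * Y
  have hAtil2 : Atil = X * S₀ + Sd - S₀ * Y := by
    have key : (U t₀)ᴴ * (((U' * S₀ + U t₀ * Sd) * (V t₀)ᴴ + U t₀ * S₀ * V'ᴴ) * V t₀)
        = ((U t₀)ᴴ * U') * S₀ * ((V t₀)ᴴ * V t₀) + ((U t₀)ᴴ * U t₀) * Sd * ((V t₀)ᴴ * V t₀)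
          + ((U t₀)ᴴ * U t₀) * (S₀ * (V'ᴴ * V t₀)) := by noncomm_ring
    rw [hAtil, hAeq, Matrix.mul_assoc, key, hU0, hV0, hVHV]
    simp only [← hX_def]
    noncomm_ring
  -- conjugate transposes of the diagonal pieces
  have hS₀H : S₀ᴴ = S₀ := by
    rw [hS₀]
    ext i j
    rcases eq_or_ne i j with h | h
    · subst h
      simp [Matrix.conjTranspose_apply, Complex.conj_ofReal]
    · simp [Matrix.conjTranspose_apply, Matrix.diagonal_apply_ne _ h,
        Matrix.diagonal_apply_ne _ (Ne.symm h)]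
  have hSdH : Sdᴴ = Sd := by
    rw [hSd_def]
    ext i j
    rcases eq_or_ne i j with h | h
    · subst h
      simp [Matrix.conjTranspose_apply, Complex.conj_ofReal]
    · simp [Matrix.conjTranspose_apply, Matrix.diagonal_apply_ne _ h,
        Matrix.diagonal_apply_ne _ (Ne.symm h)]
  have hAtilH : Atilᴴ = -(S₀ * X) + Sd + Y * S₀ := by
    rw [hAtil2]
    simp only [Matrix.conjTranspose_sub, Matrix.conjTranspose_add, Matrix.conjTranspose_mul,
      hS₀H, hSdH, hXskew, hYskew]
    noncomm_ring
  -- the main identity as matrices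
  have hsum : S₀ * Atil + Atilᴴ * S₀
      = S₀ * Sd + Sd * S₀ + (Y * (S₀ * S₀) - (S₀ * S₀) * Y) := by
    rw [hAtilH, hAtil2]
    noncomm_ring
  intro i j hij
  constructor
  · rw [hsum]
    simp only [Matrix.add_apply, Matrix.sub_apply, hS₀, hSd_def,
      Matrix.diagonal_mul_diagonal, Matrix.diagonal_apply_ne _ hij,
      Matrix.mul_diagonal, Matrix.diagonal_mul, hY_def]
    push_cast
    ring
  · simp only [Matrix.add_apply, hS₀, Matrix.diagonal_mul, Matrix.mul_diagonal,
      Matrix.conjTranspose_apply, Complex.star_def]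
    ring
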